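/- Let Φ be the untwisted affine root system of Φ̊. (1) If Ψ is a closed subroot system of Φ, then Gr(Ψ) is closed in Φ̊, i.e., α, β ∈ Gr(Ψ) and α + β ∈ Φ̊ imply α + β ∈ Gr(Ψ). (2) If Ψ is a maximal closed subroot system of Φ, then either Gr(Ψ) = Φ̊, or Gr(Ψ) is a maximal closed subroot system of Φ̊ and Ψ equals the lift of Gr(Ψ). -/

import Mathlib

noncomputable section

variable {V : Type*} [NormedAddCommGroup V] [InnerProductSpace ℝ V]

/-- The Cartan pairing `⟨β, α∨⟩ = 2(β,α)/(α,α)`. -/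
def cartanPair (α β : V) : ℝ := 2 * (inner ℝ β α : ℝ) / (inner ℝ α α : ℝ)

/-- The reflection `s_α` on `V`: `s_α(β) = β - ⟨β,α∨⟩ α`. -/
def reflV (α β : V) : V := β - cartanPair α β • α

/-- The affine reflection `s_x` on `V × ℝ` with respect to the bilinear form
`B((x,a),(y,b)) = (x,y)`. -/
def reflA (x y : V × ℝ) : V × ℝ :=
  y - (2 * (inner ℝ y.1 x.1 : ℝ) / (inner ℝ x.1 x.1 : ℝ)) • x

/-- A finite irreducible reduced crystallographic root system in `V`. -/
structure IsIrreducibleRootSystem (R : Set V) : Prop where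
  finite : R.Finite
  spans : Submodule.span ℝ R = ⊤
  zero_notMem : (0 : V) ∉ R
  reduced : ∀ α ∈ R, ∀ c : ℝ, c • α ∈ R → c = 1 ∨ c = -1
  cartan_int : ∀ α ∈ R, ∀ β ∈ R, ∃ n : ℤ, cartanPair α β = (n : ℝ)
  refl_mem : ∀ α ∈ R, ∀ β ∈ R, reflV α β ∈ R
  irred : ∀ A B : Set V, R = A ∪ B → A.Nonempty → B.Nonempty →
    ∃ a ∈ A, ∃ b ∈ B, (inner ℝ a b : ℝ) ≠ 0

/-- A subroot system of a set `Φ` of affine roots: a nonempty proper subset stable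
under the reflections `s_x`, `x ∈ Ψ`. -/
def IsSubrootSystem (Φ Ψ : Set (V × ℝ)) : Prop :=
  Ψ.Nonempty ∧ Ψ ⊆ Φ ∧ Ψ ≠ Φ ∧ ∀ x ∈ Ψ, ∀ y ∈ Ψ, reflA x y ∈ Ψ

/-- `Ψ` is closed in `Φ`. -/
def IsClosedIn (Φ Ψ : Set (V × ℝ)) : Prop := ∀ x ∈ Ψ, ∀ y ∈ Ψ, x + y ∈ Φ → x + y ∈ Ψ

def IsClosedSubrootSystem (Φ Ψ : Set (V × ℝ)) : Prop :=
  IsSubrootSystem Φ Ψ ∧ IsClosedIn Φ Ψ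

/-- A maximal closed subroot system of `Φ`: any closed subroot system of `Φ`
containing it equals it. -/
def IsMaximalClosedSubrootSystem (Φ Ψ : Set (V × ℝ)) : Prop :=
  IsClosedSubrootSystem Φ Ψ ∧ ∀ Δ, IsClosedSubrootSystem Φ Δ → Ψ ⊆ Δ → Δ = Ψ

/-- A subroot system of a finite root system `R`. -/
def IsSubrootSystemF (R S : Set V) : Prop :=
  S.Nonempty ∧ S ⊆ R ∧ S ≠ R ∧ ∀ α ∈ S, ∀ β ∈ S, reflV α β ∈ S

/-- `S` is closed in the finite root system `R`. -/
def IsClosedInF (R S : Set V) : Prop := ∀ α ∈ S, ∀ β ∈ S, α + β ∈ R → α + β ∈ S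

def IsMaximalClosedSubrootSystemF (R S : Set V) : Prop :=
  (IsSubrootSystemF R S ∧ IsClosedInF R S) ∧
    ∀ T, IsSubrootSystemF R T → IsClosedInF R T → S ⊆ T → T = S

/-- A `ℤ`-linear function on `S`: the restriction to `S` of an additive group
homomorphism from the subgroup of `V` generated by `S` to `ℤ`. -/
def IsZLinearOn (S : Set V) (p : V → ℤ) : Prop :=
  ∃ f : AddSubgroup.closure S →+ ℤ,
    ∀ α, ∀ h : α ∈ S, p α = f ⟨α, AddSubgroup.subset_closure h⟩

/-- An irreducible subset: nonempty and not a union of two nonempty mutually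
orthogonal subsets. -/
def IsIrreducibleSubset (S : Set V) : Prop :=
  S.Nonempty ∧ ∀ A B : Set V, S = A ∪ B → A.Nonempty → B.Nonempty →
    ∃ a ∈ A, ∃ b ∈ B, (inner ℝ a b : ℝ) ≠ 0

/-- The untwisted affine root system attached to `R`. -/
def affineRS (R : Set V) : Set (V × ℝ) := {x | x.1 ∈ R ∧ ∃ r : ℤ, x.2 = (r : ℝ)}

/-- The gradient of a set of affine roots. -/
def Gr (Ψ : Set (V × ℝ)) : Set V := {α | ∃ r : ℤ, (α, (r : ℝ)) ∈ Ψ}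

/-- `Z_α(Ψ) = {r ∈ ℤ : α + rδ ∈ Ψ}`. -/
def ZSet (Ψ : Set (V × ℝ)) (α : V) : Set ℤ := {r | (α, (r : ℝ)) ∈ Ψ}

/-- The difference set `{r - r' : r, r' ∈ Z_α(Ψ)}`. -/
def DiffSet (Ψ : Set (V × ℝ)) (α : V) : Set ℤ :=
  {d | ∃ r ∈ ZSet Ψ α, ∃ r' ∈ ZSet Ψ α, d = r - r'}

/-- The lift `Ŝ = {α + rδ : α ∈ S, r ∈ ℤ}` of a subset `S` of the finite root system. -/
def liftF (S : Set V) : Set (V × ℝ) := {x | x.1 ∈ S ∧ ∃ r : ℤ, x.2 = (r : ℝ)}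

section Aux

set_option linter.unusedSectionVars false

variable {V : Type*} [NormedAddCommGroup V] [InnerProductSpace ℝ V]

lemma gr_subset' {R : Set V} {Ψ : Set (V × ℝ)} (h : Ψ ⊆ affineRS R) : Gr Ψ ⊆ R := by
  rintro α ⟨r, hr⟩
  exact (h hr).1

lemma gr_liftF' (S : Set V) : Gr (liftF S) = S := by
  ext α
  constructor
  · rintro ⟨r, hr, _⟩; exact hr
  · intro h; exact ⟨0, h, ⟨0, rfl⟩⟩

lemma liftF_mono' {S T : Set V} (h : S ⊆ T) : liftF S ⊆ liftF T := by
  rintro x ⟨h1, h2⟩; exact ⟨h h1, h2⟩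

lemma subset_liftF_gr' {R : Set V} {Ψ : Set (V × ℝ)} (h : Ψ ⊆ affineRS R) :
    Ψ ⊆ liftF (Gr Ψ) := by
  intro x hx
  obtain ⟨_, r, hr⟩ := h hx
  refine ⟨⟨r, ?_⟩, r, hr⟩
  rwa [show ((x.1, (r : ℝ)) : V × ℝ) = x from Prod.ext rfl hr.symm]

lemma reflA_eq' (α β : V) (a b : ℝ) :
    reflA (α, a) (β, b) = (reflV α β, b - cartanPair α β * a) := by
  simp [reflA, reflV, cartanPair, Prod.ext_iff, smul_eq_mul]

/-- Part 1: gradient of a closed subroot system is closed. -/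
lemma gr_closedF' {R : Set V} {Ψ : Set (V × ℝ)}
    (hΨ : IsClosedSubrootSystem (affineRS R) Ψ) : IsClosedInF R (Gr Ψ) := by
  rintro α ⟨r, hr⟩ β ⟨s, hs⟩ hab
  have hsum : ((α, (r : ℝ)) : V × ℝ) + (β, (s : ℝ)) ∈ affineRS R := by
    refine ⟨hab, r + s, ?_⟩
    push_cast
    rfl
  have := hΨ.2 _ hr _ hs hsum
  refine ⟨r + s, ?_⟩
  rwa [show ((α + β, ((r + s : ℤ) : ℝ)) : V × ℝ) = (α, (r : ℝ)) + (β, (s : ℝ)) by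
    push_cast; rfl]

/-- The gradient of a subroot system is a subroot system of `R` (assuming properness). -/
lemma gr_refl' {R : Set V} (hR : IsIrreducibleRootSystem R) {Ψ : Set (V × ℝ)}
    (hΨ : IsSubrootSystem (affineRS R) Ψ) :
    ∀ α ∈ Gr Ψ, ∀ β ∈ Gr Ψ, reflV α β ∈ Gr Ψ := by
  rintro α ⟨r, hr⟩ β ⟨s, hs⟩
  have hαR : α ∈ R := (hΨ.2.1 hr).1
  have hβR : β ∈ R := (hΨ.2.1 hs).1
  obtain ⟨n, hn⟩ := hR.cartan_int α hαR β hβR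
  have hmem := hΨ.2.2.2 _ hr _ hs
  rw [reflA_eq'] at hmem
  refine ⟨s - n * r, ?_⟩
  rwa [show ((s - n * r : ℤ) : ℝ) = (s : ℝ) - cartanPair α β * r by rw [hn]; push_cast; ring]

/-- The lift of a closed subroot system of `R` is a closed subroot system of `affineRS R`. -/
lemma lift_cssr' {R : Set V} (hR : IsIrreducibleRootSystem R) {S : Set V}
    (hS : IsSubrootSystemF R S) (hSc : IsClosedInF R S) :
    IsClosedSubrootSystem (affineRS R) (liftF S) := by
  obtain ⟨⟨α0, hα0⟩, hSR, hSne, hrefl⟩ := hS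
  constructor
  · refine ⟨⟨(α0, 0), hα0, 0, by norm_num⟩, ?_, ?_, ?_⟩
    · rintro x ⟨hx1, r, hx2⟩; exact ⟨hSR hx1, r, hx2⟩
    · intro h
      apply hSne
      refine hSR.antisymm fun γ hγ => ?_
      have : ((γ, (0 : ℝ)) : V × ℝ) ∈ affineRS R := ⟨hγ, 0, by norm_num⟩
      rw [← h] at this
      exact this.1
    · rintro ⟨x1, x2⟩ ⟨hx1, r, hx2⟩ ⟨y1, y2⟩ ⟨hy1, s, hy2⟩
      obtain ⟨n, hn⟩ := hR.cartan_int x1 (hSR hx1) y1 (hSR hy1)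
      subst hx2; subst hy2
      rw [reflA_eq']
      exact ⟨hrefl _ hx1 _ hy1, s - n * r, by rw [hn]; push_cast; ring⟩
  · rintro ⟨x1, x2⟩ ⟨hx1, r, hx2⟩ ⟨y1, y2⟩ ⟨hy1, s, hy2⟩ hsum
    subst hx2; subst hy2
    refine ⟨hSc _ hx1 _ hy1 hsum.1, r + s, by push_cast; rfl⟩

end Aux

/-- (1) The gradient of a closed subroot system of the untwisted
affine root system is closed in `Φ̊`. (2) For a maximal closed subroot system `Ψ`,
either `Gr(Ψ) = Φ̊`, or `Gr(Ψ)` is a maximal closed subroot system of `Φ̊` and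
`Ψ` equals the lift of `Gr(Ψ)`. -/
theorem statement3
    {V : Type*} [NormedAddCommGroup V] [InnerProductSpace ℝ V] [FiniteDimensional ℝ V]
    (R : Set V) (hR : IsIrreducibleRootSystem R) :
    (∀ Ψ : Set (V × ℝ), IsClosedSubrootSystem (affineRS R) Ψ →
        IsClosedInF R (Gr Ψ)) ∧
    (∀ Ψ : Set (V × ℝ), IsMaximalClosedSubrootSystem (affineRS R) Ψ →
        Gr Ψ = R ∨
          (IsMaximalClosedSubrootSystemF R (Gr Ψ) ∧ Ψ = liftF (Gr Ψ))) :=  by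
  have part1 : ∀ Ψ : Set (V × ℝ), IsClosedSubrootSystem (affineRS R) Ψ →
      IsClosedInF R (Gr Ψ) := fun Ψ hΨ => gr_closedF' hΨ
  refine ⟨part1, fun Ψ hΨ => ?_⟩
  by_cases hGR : Gr Ψ = R
  · exact Or.inl hGR
  · right
    obtain ⟨⟨hsub, hcl⟩, hmax⟩ := hΨ
    have hΨΦ : Ψ ⊆ affineRS R := hsub.2.1
    -- Gr Ψ is a subroot system of R
    have hGne : (Gr Ψ).Nonempty := by
      obtain ⟨x, hx⟩ := hsub.1
      obtain ⟨_, r, hr⟩ := hΨΦ hx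
      exact ⟨x.1, r, by rwa [show ((x.1, (r : ℝ)) : V × ℝ) = x from Prod.ext rfl hr.symm]⟩
    have hGsub : IsSubrootSystemF R (Gr Ψ) :=
      ⟨hGne, gr_subset' hΨΦ, hGR, gr_refl' hR hsub⟩
    have hGcl : IsClosedInF R (Gr Ψ) := part1 Ψ ⟨hsub, hcl⟩
    -- Ψ = liftF (Gr Ψ) by maximality
    have hlift : IsClosedSubrootSystem (affineRS R) (liftF (Gr Ψ)) :=
      lift_cssr' hR hGsub hGcl
    have hΨeq : liftF (Gr Ψ) = Ψ := hmax _ hlift (subset_liftF_gr' hΨΦ)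
    refine ⟨⟨⟨hGsub, hGcl⟩, fun T hT hTcl hST => ?_⟩, hΨeq.symm⟩
    have hliftT : IsClosedSubrootSystem (affineRS R) (liftF T) :=
      lift_cssr' hR hT hTcl
    have hΨT : Ψ ⊆ liftF T := hΨeq ▸ liftF_mono' hST
    have : liftF T = Ψ := hmax _ hliftT hΨT
    calc T = Gr (liftF T) := (gr_liftF' T).symm
    _ = Gr Ψ := by rw [this]
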